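/- For a ≥ 0, b > −1 and θ ∈ [1,∞), there exist constants c₂ > c₁ > 0 (depending only on a, b) such that c₁·θ^{3+b+a} ≤ Φ_{a,b}(θ) ≤ c₂·θ^{3+b+a}. -/

import Mathlib

open Real MeasureTheory intervalIntegral Set

/-- `Φ_{a,b}(θ) = ∫₀^θ ξ² (√(1+ξ²))^a (θ²−ξ²)^b (√(1+θ²)+√(1+ξ²))^{−b} dξ`. -/
noncomputable def PhiAB (a b θ : ℝ) : ℝ :=
  ∫ ξ in (0:ℝ)..θ, ξ ^ 2 * Real.sqrt (1 + ξ ^ 2) ^ a * (θ ^ 2 - ξ ^ 2) ^ b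
    / (Real.sqrt (1 + θ ^ 2) + Real.sqrt (1 + ξ ^ 2)) ^ b

lemma aux_self_le_sqrt (x : ℝ) (hx : 0 ≤ x) : x ≤ Real.sqrt (1 + x ^ 2) := by
  calc x = Real.sqrt (x ^ 2) := (Real.sqrt_sq hx).symm
    _ ≤ Real.sqrt (1 + x ^ 2) := Real.sqrt_le_sqrt (by linarith)

lemma aux_sqrt_le (x : ℝ) (hx : 0 ≤ x) : Real.sqrt (1 + x ^ 2) ≤ 1 + x := by
  calc Real.sqrt (1 + x ^ 2) ≤ Real.sqrt ((1 + x) ^ 2) := Real.sqrt_le_sqrt (by nlinarith)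
    _ = 1 + x := Real.sqrt_sq (by linarith)

/-- On `[1,∞)`, `Φ_{a,b}(θ) ∼ θ^{3+b+a}`. -/
theorem stmt_6 (a b : ℝ) (ha : 0 ≤ a) (hb : -1 < b) :
    ∃ c₁ c₂ : ℝ, 0 < c₁ ∧ c₁ < c₂ ∧ ∀ θ ∈ Set.Ici (1:ℝ),
      c₁ * θ ^ (3 + b + a) ≤ PhiAB a b θ ∧ PhiAB a b θ ≤ c₂ * θ ^ (3 + b + a) := by
  have hb1 : (0:ℝ) < 1 + b := by linarith
  set c₁ : ℝ := (2:ℝ) ^ (-a) * (12:ℝ) ^ (-|b|) / 16 with hc1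
  set c₂ : ℝ := (Real.sqrt 2) ^ a * (3:ℝ) ^ |b| / (1 + b) with hc2
  have hsqrt2 : (0:ℝ) < Real.sqrt 2 := Real.sqrt_pos.mpr (by norm_num)
  have hc₁pos : 0 < c₁ := by
    apply div_pos _ (by norm_num)
    exact mul_pos (Real.rpow_pos_of_pos (by norm_num) _) (Real.rpow_pos_of_pos (by norm_num) _)
  have hc₂pos : 0 < c₂ :=
    div_pos (mul_pos (Real.rpow_pos_of_pos hsqrt2 _) (Real.rpow_pos_of_pos (by norm_num) _)) hb1
  refine ⟨c₁, c₁ + c₂, hc₁pos, by linarith, ?_⟩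
  intro θ hθ
  have hθ1 : (1:ℝ) ≤ θ := hθ
  have hθ0 : (0:ℝ) < θ := by linarith
  set f : ℝ → ℝ := fun ξ => ξ ^ 2 * Real.sqrt (1 + ξ ^ 2) ^ a * (θ ^ 2 - ξ ^ 2) ^ b
    / (Real.sqrt (1 + θ ^ 2) + Real.sqrt (1 + ξ ^ 2)) ^ b with hfdef
  have hPhi : PhiAB a b θ = ∫ ξ in (0:ℝ)..θ, f ξ := rfl
  -- denominator bounds
  have hDpos : ∀ ξ : ℝ, 0 < Real.sqrt (1 + θ ^ 2) + Real.sqrt (1 + ξ ^ 2) := by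
    intro ξ
    have := Real.sqrt_pos.mpr (show (0:ℝ) < 1 + θ ^ 2 by positivity)
    have := Real.sqrt_nonneg (1 + ξ ^ 2)
    linarith
  have hD1 : ∀ ξ ∈ Icc (0:ℝ) θ, θ + ξ ≤ Real.sqrt (1 + θ ^ 2) + Real.sqrt (1 + ξ ^ 2) := by
    intro ξ hξ
    have h1 := aux_self_le_sqrt θ hθ0.le
    have h2 := aux_self_le_sqrt ξ hξ.1
    linarith
  have hD2 : ∀ ξ ∈ Icc (0:ℝ) θ,
      Real.sqrt (1 + θ ^ 2) + Real.sqrt (1 + ξ ^ 2) ≤ 3 * (θ + ξ) := by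
    intro ξ hξ
    obtain ⟨hξa, hξb⟩ := hξ
    have h1 := aux_sqrt_le θ hθ0.le
    have h2 := aux_sqrt_le ξ hξa
    linarith
  -- ratio bounds
  have hr13 : ∀ ξ ∈ Icc (0:ℝ) θ,
      (1:ℝ)/3 ≤ (θ + ξ) / (Real.sqrt (1 + θ ^ 2) + Real.sqrt (1 + ξ ^ 2)) := by
    intro ξ hξ
    rw [le_div_iff₀ (hDpos ξ)]
    have := hD2 ξ hξ
    linarith
  have hr1 : ∀ ξ ∈ Icc (0:ℝ) θ,
      (θ + ξ) / (Real.sqrt (1 + θ ^ 2) + Real.sqrt (1 + ξ ^ 2)) ≤ 1 := by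
    intro ξ hξ
    rw [div_le_one (hDpos ξ)]
    exact hD1 ξ hξ
  -- decomposition
  have hdec : ∀ ξ ∈ Icc (0:ℝ) θ, f ξ = ξ ^ 2 * Real.sqrt (1 + ξ ^ 2) ^ a * (θ - ξ) ^ b
      * ((θ + ξ) / (Real.sqrt (1 + θ ^ 2) + Real.sqrt (1 + ξ ^ 2))) ^ b := by
    intro ξ hξ
    have h1 : θ ^ 2 - ξ ^ 2 = (θ - ξ) * (θ + ξ) := by ring
    have h2 : (θ ^ 2 - ξ ^ 2) ^ b = (θ - ξ) ^ b * (θ + ξ) ^ b := by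
      rw [h1, Real.mul_rpow (by linarith [hξ.2]) (by linarith [hξ.1])]
    have h3 : ((θ + ξ) / (Real.sqrt (1 + θ ^ 2) + Real.sqrt (1 + ξ ^ 2))) ^ b
        = (θ + ξ) ^ b / (Real.sqrt (1 + θ ^ 2) + Real.sqrt (1 + ξ ^ 2)) ^ b :=
      Real.div_rpow (by linarith [hξ.1]) (hDpos ξ).le b
    rw [hfdef]
    simp only []
    rw [h2, h3]
    ring
  -- nonnegativity
  have hf0 : ∀ ξ ∈ Icc (0:ℝ) θ, 0 ≤ f ξ := by
    intro ξ hξ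
    rw [hdec ξ hξ]
    have := hr13 ξ hξ
    have h1 : 0 ≤ (θ - ξ) ^ b := Real.rpow_nonneg (by linarith [hξ.2]) b
    have h2 : 0 ≤ ((θ + ξ) / (Real.sqrt (1 + θ ^ 2) + Real.sqrt (1 + ξ ^ 2))) ^ b :=
      Real.rpow_nonneg (by linarith) b
    have h3 : 0 ≤ Real.sqrt (1 + ξ ^ 2) ^ a := Real.rpow_nonneg (Real.sqrt_nonneg _) a
    positivity
  -- upper pointwise bound
  set K : ℝ := θ ^ 2 * (Real.sqrt 2 * θ) ^ a * (3:ℝ) ^ |b| with hK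
  have hub : ∀ ξ ∈ Icc (0:ℝ) θ, f ξ ≤ K * (θ - ξ) ^ b := by
    intro ξ hξ
    rw [hdec ξ hξ]
    have h1 : ξ ^ 2 ≤ θ ^ 2 := by nlinarith [hξ.1, hξ.2]
    have h2 : Real.sqrt (1 + ξ ^ 2) ^ a ≤ (Real.sqrt 2 * θ) ^ a := by
      apply Real.rpow_le_rpow (Real.sqrt_nonneg _) _ ha
      calc Real.sqrt (1 + ξ ^ 2) ≤ Real.sqrt (2 * θ ^ 2) := by
            apply Real.sqrt_le_sqrt; nlinarith [hξ.1, hξ.2]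
        _ = Real.sqrt 2 * θ := by
            rw [Real.sqrt_mul (by norm_num), Real.sqrt_sq hθ0.le]
    have h3 : ((θ + ξ) / (Real.sqrt (1 + θ ^ 2) + Real.sqrt (1 + ξ ^ 2))) ^ b ≤ (3:ℝ) ^ |b| := by
      rcases le_or_gt 0 b with hb' | hb'
      · calc ((θ + ξ) / (Real.sqrt (1 + θ ^ 2) + Real.sqrt (1 + ξ ^ 2))) ^ b ≤ 1 :=
              Real.rpow_le_one (by have := hr13 ξ hξ; linarith) (hr1 ξ hξ) hb'
          _ ≤ (3:ℝ) ^ |b| := Real.one_le_rpow (by norm_num) (abs_nonneg b)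
      · calc ((θ + ξ) / (Real.sqrt (1 + θ ^ 2) + Real.sqrt (1 + ξ ^ 2))) ^ b
            ≤ ((1:ℝ)/3) ^ b :=
              Real.rpow_le_rpow_of_nonpos (by norm_num) (hr13 ξ hξ) hb'.le
          _ = (3:ℝ) ^ |b| := by
              rw [abs_of_neg hb', one_div, Real.inv_rpow (by norm_num), ← Real.rpow_neg (by norm_num)]
    have h4 : 0 ≤ (θ - ξ) ^ b := Real.rpow_nonneg (by linarith [hξ.2]) b
    have h5 : 0 ≤ Real.sqrt (1 + ξ ^ 2) ^ a := Real.rpow_nonneg (Real.sqrt_nonneg _) a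
    have h6 : 0 ≤ ((θ + ξ) / (Real.sqrt (1 + θ ^ 2) + Real.sqrt (1 + ξ ^ 2))) ^ b :=
      Real.rpow_nonneg (by have := hr13 ξ hξ; linarith) b
    calc ξ ^ 2 * Real.sqrt (1 + ξ ^ 2) ^ a * (θ - ξ) ^ b
        * ((θ + ξ) / (Real.sqrt (1 + θ ^ 2) + Real.sqrt (1 + ξ ^ 2))) ^ b
        ≤ θ ^ 2 * (Real.sqrt 2 * θ) ^ a * (θ - ξ) ^ b * (3:ℝ) ^ |b| := by
          apply mul_le_mul _ h3 h6 (by positivity)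
          apply mul_le_mul_of_nonneg_right _ h4
          exact mul_le_mul h1 h2 h5 (by positivity)
      _ = K * (θ - ξ) ^ b := by rw [hK]; ring
  -- integrability of the dominating function
  have hKint : IntervalIntegrable (fun ξ => K * (θ - ξ) ^ b) volume 0 θ := by
    have h1 : IntervalIntegrable (fun x : ℝ => x ^ b) volume 0 θ := intervalIntegrable_rpow' hb
    have h2 := (h1.comp_sub_left θ).symm
    simpa using h2.const_mul K
  -- measurability
  have hmeas : AEStronglyMeasurable f (volume.restrict (uIoc (0:ℝ) θ)) := by
    apply Measurable.aestronglyMeasurable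
    rw [hfdef]
    fun_prop
  -- integrability of f
  have hIccIoc : uIoc (0:ℝ) θ ⊆ Icc 0 θ := by
    rw [uIoc_of_le hθ0.le]
    exact Ioc_subset_Icc_self
  have hint : IntervalIntegrable f volume 0 θ := by
    apply hKint.mono_fun hmeas
    filter_upwards [ae_restrict_mem measurableSet_uIoc] with ξ hξ
    have hξ' : ξ ∈ Icc (0:ℝ) θ := hIccIoc hξ
    have h4 : 0 ≤ (θ - ξ) ^ b := Real.rpow_nonneg (by linarith [hξ'.2]) b
    rw [Real.norm_eq_abs, Real.norm_eq_abs, abs_of_nonneg (hf0 ξ hξ'),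
      abs_of_nonneg (by positivity : 0 ≤ K * (θ - ξ) ^ b)]
    exact hub ξ hξ'
  -- exponent splitting facts
  have hθp : (0:ℝ) ≤ θ ^ (3 + b + a) := Real.rpow_nonneg hθ0.le _
  constructor
  · -- lower bound
    have hsub : ∀ c d : ℝ, c ∈ Icc (0:ℝ) θ → d ∈ Icc (0:ℝ) θ →
        IntervalIntegrable f volume c d := by
      intro c d hc hd
      apply hint.mono_set
      rw [uIcc_of_le hθ0.le]
      exact uIcc_subset_Icc hc hd
    have hm1 : (0:ℝ) ∈ Icc (0:ℝ) θ := ⟨le_refl _, hθ0.le⟩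
    have hm2 : θ/2 ∈ Icc (0:ℝ) θ := ⟨by linarith, by linarith⟩
    have hm3 : 3*θ/4 ∈ Icc (0:ℝ) θ := ⟨by linarith, by linarith⟩
    have hm4 : θ ∈ Icc (0:ℝ) θ := ⟨hθ0.le, le_refl _⟩
    have hsplit1 : (∫ x in (0:ℝ)..(θ/2), f x) + ∫ x in (θ/2)..θ, f x = ∫ x in (0:ℝ)..θ, f x :=
      integral_add_adjacent_intervals (hsub _ _ hm1 hm2) (hsub _ _ hm2 hm4)
    have hsplit2 : (∫ x in (θ/2)..(3*θ/4), f x) + ∫ x in (3*θ/4)..θ, f x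
        = ∫ x in (θ/2)..θ, f x :=
      integral_add_adjacent_intervals (hsub _ _ hm2 hm3) (hsub _ _ hm3 hm4)
    have hside1 : 0 ≤ ∫ x in (0:ℝ)..(θ/2), f x := by
      apply intervalIntegral.integral_nonneg (by linarith)
      intro u hu
      exact hf0 u ⟨hu.1, by linarith [hu.2]⟩
    have hside2 : 0 ≤ ∫ x in (3*θ/4)..θ, f x := by
      apply intervalIntegral.integral_nonneg (by linarith)
      intro u hu
      exact hf0 u ⟨by linarith [hu.1], hu.2⟩
    -- pointwise lower bound on the middle interval
    set m : ℝ := θ ^ 2 / 4 * (θ/2) ^ a * (θ ^ b * (4:ℝ) ^ (-|b|)) * (3:ℝ) ^ (-|b|) with hm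
    have hlb : ∀ ξ ∈ Icc (θ/2) (3*θ/4), m ≤ f ξ := by
      intro ξ hξ
      have hξ0 : (0:ℝ) ≤ ξ := by linarith [hξ.1]
      have hξI : ξ ∈ Icc (0:ℝ) θ := ⟨hξ0, by linarith [hξ.2]⟩
      rw [hdec ξ hξI]
      have h1 : θ ^ 2 / 4 ≤ ξ ^ 2 := by nlinarith [hξ.1]
      have h2 : (θ/2) ^ a ≤ Real.sqrt (1 + ξ ^ 2) ^ a := by
        apply Real.rpow_le_rpow (by linarith) _ ha
        calc θ/2 ≤ ξ := hξ.1
          _ ≤ Real.sqrt (1 + ξ ^ 2) := aux_self_le_sqrt ξ hξ0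
      have hq1 : θ/4 ≤ θ - ξ := by linarith [hξ.2]
      have hq2 : θ - ξ ≤ θ/2 := by linarith [hξ.1]
      have h3 : θ ^ b * (4:ℝ) ^ (-|b|) ≤ (θ - ξ) ^ b := by
        rcases le_or_gt 0 b with hb' | hb'
        · calc θ ^ b * (4:ℝ) ^ (-|b|) = (θ/4) ^ b := by
                rw [abs_of_nonneg hb', Real.div_rpow hθ0.le (by norm_num),
                  Real.rpow_neg (by norm_num), div_eq_mul_inv]
            _ ≤ (θ - ξ) ^ b := Real.rpow_le_rpow (by positivity) hq1 hb'
        · calc θ ^ b * (4:ℝ) ^ (-|b|)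
              ≤ θ ^ b * (2:ℝ) ^ |b| := by
                apply mul_le_mul_of_nonneg_left _ (Real.rpow_nonneg hθ0.le b)
                calc (4:ℝ) ^ (-|b|) ≤ 1 :=
                      Real.rpow_le_one_of_one_le_of_nonpos (by norm_num)
                        (neg_nonpos.mpr (abs_nonneg b))
                  _ ≤ (2:ℝ) ^ |b| := Real.one_le_rpow (by norm_num) (abs_nonneg b)
            _ = (θ/2) ^ b := by
                rw [abs_of_neg hb', Real.div_rpow hθ0.le (by norm_num),
                  Real.rpow_neg (by norm_num : (0:ℝ) ≤ 2), div_eq_mul_inv]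
            _ ≤ (θ - ξ) ^ b :=
                Real.rpow_le_rpow_of_nonpos (by linarith) hq2 hb'.le
      have h4 : (3:ℝ) ^ (-|b|)
          ≤ ((θ + ξ) / (Real.sqrt (1 + θ ^ 2) + Real.sqrt (1 + ξ ^ 2))) ^ b := by
        rcases le_or_gt 0 b with hb' | hb'
        · calc (3:ℝ) ^ (-|b|) = ((1:ℝ)/3) ^ b := by
                rw [abs_of_nonneg hb', one_div, Real.inv_rpow (by norm_num),
                  ← Real.rpow_neg (by norm_num)]
            _ ≤ _ := Real.rpow_le_rpow (by norm_num) (hr13 ξ hξI) hb'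
        · calc (3:ℝ) ^ (-|b|) ≤ 1 :=
                Real.rpow_le_one_of_one_le_of_nonpos (by norm_num)
                  (neg_nonpos.mpr (abs_nonneg b))
            _ = (1:ℝ) ^ b := (Real.one_rpow b).symm
            _ ≤ _ := Real.rpow_le_rpow_of_nonpos
                (by have := hr13 ξ hξI; linarith) (hr1 ξ hξI) hb'.le
      have p2 : 0 ≤ (θ/2) ^ a := Real.rpow_nonneg (by linarith) a
      have p3 : 0 ≤ θ ^ b * (4:ℝ) ^ (-|b|) := by positivity
      have p4 : 0 ≤ (3:ℝ) ^ (-|b|) := Real.rpow_nonneg (by norm_num) _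
      have s2 : 0 ≤ Real.sqrt (1 + ξ ^ 2) ^ a := Real.rpow_nonneg (Real.sqrt_nonneg _) a
      rw [hm]
      apply mul_le_mul _ h4 p4 _
      · apply mul_le_mul _ h3 p3 _
        · exact mul_le_mul h1 h2 p2 (by positivity)
        · positivity
      · have h5 : 0 ≤ (θ - ξ) ^ b := Real.rpow_nonneg (by linarith) b
        positivity
    have hmid : (3*θ/4 - θ/2) * m ≤ ∫ ξ in (θ/2)..(3*θ/4), f ξ := by
      have h := intervalIntegral.integral_mono_on (μ := volume) (f := fun _ => m) (g := f)
        (a := θ/2) (b := 3*θ/4) (by linarith) (intervalIntegrable_const) (hsub _ _ hm2 hm3) hlb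
      rwa [intervalIntegral.integral_const, smul_eq_mul] at h
    have hval : c₁ * θ ^ (3 + b + a) = (3*θ/4 - θ/2) * m := by
      have e1 : θ ^ (3 + b + a) = θ * θ ^ 2 * θ ^ a * θ ^ b := by
        rw [show (3 + b + a : ℝ) = (1:ℝ) + 2 + a + b by ring, Real.rpow_add hθ0,
          Real.rpow_add hθ0, Real.rpow_add hθ0, Real.rpow_one,
          show ((2:ℝ)) = ((2:ℕ):ℝ) by norm_num, Real.rpow_natCast]
      have e2 : (12:ℝ) ^ (-|b|) = (4:ℝ) ^ (-|b|) * (3:ℝ) ^ (-|b|) := by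
        rw [show (12:ℝ) = 4 * 3 by norm_num, Real.mul_rpow (by norm_num) (by norm_num)]
      have e3 : (θ/2) ^ a = θ ^ a * (2:ℝ) ^ (-a) := by
        rw [Real.div_rpow hθ0.le (by norm_num), Real.rpow_neg (by norm_num), div_eq_mul_inv]
      rw [hc1, hm, e1, e2, e3]
      ring
    rw [hPhi, ← hsplit1, ← hsplit2, hval]
    linarith
  · -- upper bound
    have h1 : PhiAB a b θ ≤ ∫ ξ in (0:ℝ)..θ, K * (θ - ξ) ^ b := by
      rw [hPhi]
      exact intervalIntegral.integral_mono_on hθ0.le hint hKint hub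
    have h2 : (∫ ξ in (0:ℝ)..θ, K * (θ - ξ) ^ b) = K * (θ ^ (b+1) / (b+1)) := by
      rw [intervalIntegral.integral_const_mul]
      congr 1
      rw [intervalIntegral.integral_comp_sub_left (fun x => x ^ b) θ, sub_self, sub_zero,
        integral_rpow (Or.inl hb), Real.zero_rpow (by linarith : b + 1 ≠ 0)]
      ring
    have h3 : K * (θ ^ (b+1) / (b+1)) = c₂ * θ ^ (3 + b + a) := by
      have e1 : θ ^ (3 + b + a) = θ ^ 2 * θ ^ a * θ ^ (b+1) := by
        rw [show (3 + b + a : ℝ) = (2:ℝ) + a + (b+1) by ring, Real.rpow_add hθ0,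
          Real.rpow_add hθ0, show ((2:ℝ)) = ((2:ℕ):ℝ) by norm_num, Real.rpow_natCast]
      have e2 : (Real.sqrt 2 * θ) ^ a = Real.sqrt 2 ^ a * θ ^ a :=
        Real.mul_rpow (Real.sqrt_nonneg 2) hθ0.le
      have hne : (1+b) ≠ 0 := hb1.ne'
      have hcancel : (1+b) * (1+b)⁻¹ = 1 := mul_inv_cancel₀ hne
      rw [hc2, hK, e1, e2, show b + 1 = 1 + b from by ring]
      field_simp
    rw [h2, h3] at h1
    rw [add_mul]
    have := mul_nonneg hc₁pos.le hθp
    linarith
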